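/- For n = 12, the matrix M of the E₆ invariant, defined by M_{ab} = 1 if (a,b) ∈ {(1,1),(1,7),(7,1),(7,7),(4,4),(4,8),(8,4),(8,8),(5,5),(5,11),(11,5),(11,11)} and 0 otherwise, commutes with S and T, has nonnegative integer entries, and M_{11} = 1. -/
import Mathlib

open Real Finset Complex

noncomputable def f (k : ℕ) : ℝ := Real.sin (Real.pi * k / 12)


lemma F7 : f 7 = f 5 := by
  unfold f
  rw [show (Real.pi * (7:ℕ) / 12 : ℝ) = (Real.pi - Real.pi * (5:ℕ) / 12) + (0:ℕ) * (2 * Real.pi) by push_cast; ring,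
    Real.sin_add_nat_mul_two_pi, Real.sin_pi_sub]

lemma F8 : f 8 = f 4 := by
  unfold f
  rw [show (Real.pi * (8:ℕ) / 12 : ℝ) = (Real.pi - Real.pi * (4:ℕ) / 12) + (0:ℕ) * (2 * Real.pi) by push_cast; ring,
    Real.sin_add_nat_mul_two_pi, Real.sin_pi_sub]

lemma F9 : f 9 = f 3 := by
  unfold f
  rw [show (Real.pi * (9:ℕ) / 12 : ℝ) = (Real.pi - Real.pi * (3:ℕ) / 12) + (0:ℕ) * (2 * Real.pi) by push_cast; ring,
    Real.sin_add_nat_mul_two_pi, Real.sin_pi_sub]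

lemma F10 : f 10 = f 2 := by
  unfold f
  rw [show (Real.pi * (10:ℕ) / 12 : ℝ) = (Real.pi - Real.pi * (2:ℕ) / 12) + (0:ℕ) * (2 * Real.pi) by push_cast; ring,
    Real.sin_add_nat_mul_two_pi, Real.sin_pi_sub]

lemma F11 : f 11 = f 1 := by
  unfold f
  rw [show (Real.pi * (11:ℕ) / 12 : ℝ) = (Real.pi - Real.pi * (1:ℕ) / 12) + (0:ℕ) * (2 * Real.pi) by push_cast; ring,
    Real.sin_add_nat_mul_two_pi, Real.sin_pi_sub]

lemma F12 : f 12 = f 0 := by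
  unfold f
  rw [show (Real.pi * (12:ℕ) / 12 : ℝ) = (Real.pi - Real.pi * (0:ℕ) / 12) + (0:ℕ) * (2 * Real.pi) by push_cast; ring,
    Real.sin_add_nat_mul_two_pi, Real.sin_pi_sub]

lemma F14 : f 14 = -f 2 := by
  unfold f
  rw [show (Real.pi * (14:ℕ) / 12 : ℝ) = (Real.pi * (2:ℕ) / 12 + Real.pi) + (0:ℕ) * (2 * Real.pi) by push_cast; ring,
    Real.sin_add_nat_mul_two_pi, Real.sin_add_pi]

lemma F15 : f 15 = -f 3 := by
  unfold f
  rw [show (Real.pi * (15:ℕ) / 12 : ℝ) = (Real.pi * (3:ℕ) / 12 + Real.pi) + (0:ℕ) * (2 * Real.pi) by push_cast; ring,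
    Real.sin_add_nat_mul_two_pi, Real.sin_add_pi]

lemma F16 : f 16 = -f 4 := by
  unfold f
  rw [show (Real.pi * (16:ℕ) / 12 : ℝ) = (Real.pi * (4:ℕ) / 12 + Real.pi) + (0:ℕ) * (2 * Real.pi) by push_cast; ring,
    Real.sin_add_nat_mul_two_pi, Real.sin_add_pi]

lemma F20 : f 20 = -f 4 := by
  unfold f
  rw [show (Real.pi * (20:ℕ) / 12 : ℝ) = -(Real.pi * (4:ℕ) / 12) + (1:ℕ) * (2 * Real.pi) by push_cast; ring,
    Real.sin_add_nat_mul_two_pi, Real.sin_neg]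

lemma F21 : f 21 = -f 3 := by
  unfold f
  rw [show (Real.pi * (21:ℕ) / 12 : ℝ) = -(Real.pi * (3:ℕ) / 12) + (1:ℕ) * (2 * Real.pi) by push_cast; ring,
    Real.sin_add_nat_mul_two_pi, Real.sin_neg]

lemma F22 : f 22 = -f 2 := by
  unfold f
  rw [show (Real.pi * (22:ℕ) / 12 : ℝ) = -(Real.pi * (2:ℕ) / 12) + (1:ℕ) * (2 * Real.pi) by push_cast; ring,
    Real.sin_add_nat_mul_two_pi, Real.sin_neg]

lemma F24 : f 24 = f 0 := by
  unfold f
  rw [show (Real.pi * (24:ℕ) / 12 : ℝ) = Real.pi * (0:ℕ) / 12 + (1:ℕ) * (2 * Real.pi) by push_cast; ring]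
  exact Real.sin_add_nat_mul_two_pi _ _

lemma F25 : f 25 = f 1 := by
  unfold f
  rw [show (Real.pi * (25:ℕ) / 12 : ℝ) = Real.pi * (1:ℕ) / 12 + (1:ℕ) * (2 * Real.pi) by push_cast; ring]
  exact Real.sin_add_nat_mul_two_pi _ _

lemma F28 : f 28 = f 4 := by
  unfold f
  rw [show (Real.pi * (28:ℕ) / 12 : ℝ) = Real.pi * (4:ℕ) / 12 + (1:ℕ) * (2 * Real.pi) by push_cast; ring]
  exact Real.sin_add_nat_mul_two_pi _ _

lemma F30 : f 30 = f 6 := by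
  unfold f
  rw [show (Real.pi * (30:ℕ) / 12 : ℝ) = Real.pi * (6:ℕ) / 12 + (1:ℕ) * (2 * Real.pi) by push_cast; ring]
  exact Real.sin_add_nat_mul_two_pi _ _

lemma F32 : f 32 = f 4 := by
  unfold f
  rw [show (Real.pi * (32:ℕ) / 12 : ℝ) = (Real.pi - Real.pi * (4:ℕ) / 12) + (1:ℕ) * (2 * Real.pi) by push_cast; ring,
    Real.sin_add_nat_mul_two_pi, Real.sin_pi_sub]

lemma F33 : f 33 = f 3 := by
  unfold f
  rw [show (Real.pi * (33:ℕ) / 12 : ℝ) = (Real.pi - Real.pi * (3:ℕ) / 12) + (1:ℕ) * (2 * Real.pi) by push_cast; ring,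
    Real.sin_add_nat_mul_two_pi, Real.sin_pi_sub]

lemma F35 : f 35 = f 1 := by
  unfold f
  rw [show (Real.pi * (35:ℕ) / 12 : ℝ) = (Real.pi - Real.pi * (1:ℕ) / 12) + (1:ℕ) * (2 * Real.pi) by push_cast; ring,
    Real.sin_add_nat_mul_two_pi, Real.sin_pi_sub]

lemma F36 : f 36 = f 0 := by
  unfold f
  rw [show (Real.pi * (36:ℕ) / 12 : ℝ) = (Real.pi - Real.pi * (0:ℕ) / 12) + (1:ℕ) * (2 * Real.pi) by push_cast; ring,
    Real.sin_add_nat_mul_two_pi, Real.sin_pi_sub]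

lemma F40 : f 40 = -f 4 := by
  unfold f
  rw [show (Real.pi * (40:ℕ) / 12 : ℝ) = (Real.pi * (4:ℕ) / 12 + Real.pi) + (1:ℕ) * (2 * Real.pi) by push_cast; ring,
    Real.sin_add_nat_mul_two_pi, Real.sin_add_pi]

lemma F42 : f 42 = -f 6 := by
  unfold f
  rw [show (Real.pi * (42:ℕ) / 12 : ℝ) = (Real.pi * (6:ℕ) / 12 + Real.pi) + (1:ℕ) * (2 * Real.pi) by push_cast; ring,
    Real.sin_add_nat_mul_two_pi, Real.sin_add_pi]

lemma F44 : f 44 = -f 4 := by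
  unfold f
  rw [show (Real.pi * (44:ℕ) / 12 : ℝ) = -(Real.pi * (4:ℕ) / 12) + (2:ℕ) * (2 * Real.pi) by push_cast; ring,
    Real.sin_add_nat_mul_two_pi, Real.sin_neg]

lemma F45 : f 45 = -f 3 := by
  unfold f
  rw [show (Real.pi * (45:ℕ) / 12 : ℝ) = -(Real.pi * (3:ℕ) / 12) + (2:ℕ) * (2 * Real.pi) by push_cast; ring,
    Real.sin_add_nat_mul_two_pi, Real.sin_neg]

lemma F48 : f 48 = f 0 := by
  unfold f
  rw [show (Real.pi * (48:ℕ) / 12 : ℝ) = Real.pi * (0:ℕ) / 12 + (2:ℕ) * (2 * Real.pi) by push_cast; ring]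
  exact Real.sin_add_nat_mul_two_pi _ _

lemma F49 : f 49 = f 1 := by
  unfold f
  rw [show (Real.pi * (49:ℕ) / 12 : ℝ) = Real.pi * (1:ℕ) / 12 + (2:ℕ) * (2 * Real.pi) by push_cast; ring]
  exact Real.sin_add_nat_mul_two_pi _ _

lemma F50 : f 50 = f 2 := by
  unfold f
  rw [show (Real.pi * (50:ℕ) / 12 : ℝ) = Real.pi * (2:ℕ) / 12 + (2:ℕ) * (2 * Real.pi) by push_cast; ring]
  exact Real.sin_add_nat_mul_two_pi _ _

lemma F55 : f 55 = f 5 := by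
  unfold f
  rw [show (Real.pi * (55:ℕ) / 12 : ℝ) = (Real.pi - Real.pi * (5:ℕ) / 12) + (2:ℕ) * (2 * Real.pi) by push_cast; ring,
    Real.sin_add_nat_mul_two_pi, Real.sin_pi_sub]

lemma F56 : f 56 = f 4 := by
  unfold f
  rw [show (Real.pi * (56:ℕ) / 12 : ℝ) = (Real.pi - Real.pi * (4:ℕ) / 12) + (2:ℕ) * (2 * Real.pi) by push_cast; ring,
    Real.sin_add_nat_mul_two_pi, Real.sin_pi_sub]

lemma F63 : f 63 = -f 3 := by
  unfold f
  rw [show (Real.pi * (63:ℕ) / 12 : ℝ) = (Real.pi * (3:ℕ) / 12 + Real.pi) + (2:ℕ) * (2 * Real.pi) by push_cast; ring,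
    Real.sin_add_nat_mul_two_pi, Real.sin_add_pi]

lemma F64 : f 64 = -f 4 := by
  unfold f
  rw [show (Real.pi * (64:ℕ) / 12 : ℝ) = (Real.pi * (4:ℕ) / 12 + Real.pi) + (2:ℕ) * (2 * Real.pi) by push_cast; ring,
    Real.sin_add_nat_mul_two_pi, Real.sin_add_pi]

lemma F66 : f 66 = -f 6 := by
  unfold f
  rw [show (Real.pi * (66:ℕ) / 12 : ℝ) = (Real.pi * (6:ℕ) / 12 + Real.pi) + (2:ℕ) * (2 * Real.pi) by push_cast; ring,
    Real.sin_add_nat_mul_two_pi, Real.sin_add_pi]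

lemma F70 : f 70 = -f 2 := by
  unfold f
  rw [show (Real.pi * (70:ℕ) / 12 : ℝ) = -(Real.pi * (2:ℕ) / 12) + (3:ℕ) * (2 * Real.pi) by push_cast; ring,
    Real.sin_add_nat_mul_two_pi, Real.sin_neg]

lemma F72 : f 72 = f 0 := by
  unfold f
  rw [show (Real.pi * (72:ℕ) / 12 : ℝ) = Real.pi * (0:ℕ) / 12 + (3:ℕ) * (2 * Real.pi) by push_cast; ring]
  exact Real.sin_add_nat_mul_two_pi _ _

lemma F77 : f 77 = f 5 := by
  unfold f
  rw [show (Real.pi * (77:ℕ) / 12 : ℝ) = Real.pi * (5:ℕ) / 12 + (3:ℕ) * (2 * Real.pi) by push_cast; ring]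
  exact Real.sin_add_nat_mul_two_pi _ _

lemma F80 : f 80 = f 4 := by
  unfold f
  rw [show (Real.pi * (80:ℕ) / 12 : ℝ) = (Real.pi - Real.pi * (4:ℕ) / 12) + (3:ℕ) * (2 * Real.pi) by push_cast; ring,
    Real.sin_add_nat_mul_two_pi, Real.sin_pi_sub]

lemma F88 : f 88 = -f 4 := by
  unfold f
  rw [show (Real.pi * (88:ℕ) / 12 : ℝ) = (Real.pi * (4:ℕ) / 12 + Real.pi) + (3:ℕ) * (2 * Real.pi) by push_cast; ring,
    Real.sin_add_nat_mul_two_pi, Real.sin_add_pi]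

lemma F99 : f 99 = f 3 := by
  unfold f
  rw [show (Real.pi * (99:ℕ) / 12 : ℝ) = Real.pi * (3:ℕ) / 12 + (4:ℕ) * (2 * Real.pi) by push_cast; ring]
  exact Real.sin_add_nat_mul_two_pi _ _

lemma F110 : f 110 = -f 2 := by
  unfold f
  rw [show (Real.pi * (110:ℕ) / 12 : ℝ) = (Real.pi * (2:ℕ) / 12 + Real.pi) + (4:ℕ) * (2 * Real.pi) by push_cast; ring,
    Real.sin_add_nat_mul_two_pi, Real.sin_add_pi]

lemma F121 : f 121 = f 1 := by
  unfold f
  rw [show (Real.pi * (121:ℕ) / 12 : ℝ) = Real.pi * (1:ℕ) / 12 + (5:ℕ) * (2 * Real.pi) by push_cast; ring]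
  exact Real.sin_add_nat_mul_two_pi _ _

lemma F0 : f 0 = 0 := by unfold f; norm_num

lemma hsum (g : ℕ → ℂ) : ∑ c ∈ Finset.Icc 1 11, g c =
    g 1 + g 2 + g 3 + g 4 + g 5 + g 6 + g 7 + g 8 + g 9 + g 10 + g 11 := by
  simp [Finset.sum_Icc_succ_top, show (11:ℕ) = 10+1 from rfl, show (10:ℕ) = 9+1 from rfl,
    show (9:ℕ) = 8+1 from rfl, show (8:ℕ) = 7+1 from rfl, show (7:ℕ) = 6+1 from rfl,
    show (6:ℕ) = 5+1 from rfl, show (5:ℕ) = 4+1 from rfl, show (4:ℕ) = 3+1 from rfl,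
    show (3:ℕ) = 2+1 from rfl, show (2:ℕ) = 1+1 from rfl]

lemma expe (a b q : ℕ) (h : b^2 = a^2 + 48*q) :
    Complex.exp (↑Real.pi * Complex.I * ((b:ℕ):ℂ)^2/24) =
      Complex.exp (↑Real.pi * Complex.I * ((a:ℕ):ℂ)^2/24) := by
  have hb : ((b:ℕ):ℂ)^2 = ((a:ℕ):ℂ)^2 + 48*(q:ℂ) := by exact_mod_cast h
  rw [show (↑Real.pi * Complex.I * ((b:ℕ):ℂ)^2/24 : ℂ) =
      ↑Real.pi * Complex.I * ((a:ℕ):ℂ)^2/24 + ((q:ℤ):ℂ)*(2*↑Real.pi*Complex.I) by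
        rw [hb]; push_cast; ring,
    Complex.exp_add, Complex.exp_int_mul_two_pi_mul_I, mul_one]

set_option maxHeartbeats 4000000 in
theorem stmt_16 (S T M : ℕ → ℕ → ℂ)
    (hS : ∀ a b, S a b =
      ((Real.sqrt (2 / 12) * Real.sin (π * a * b / 12) : ℝ) : ℂ))
    (hT : ∀ a b, T a b =
      Complex.exp (Real.pi * Complex.I * a ^ 2 / 24) * (if a = b then 1 else 0))
    (hM : ∀ a b, M a b =
      if ((a = 1 ∨ a = 7) ∧ (b = 1 ∨ b = 7)) ∨
         ((a = 4 ∨ a = 8) ∧ (b = 4 ∨ b = 8)) ∨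
         ((a = 5 ∨ a = 11) ∧ (b = 5 ∨ b = 11)) then 1 else 0) :
    (∀ a ∈ Finset.Icc 1 11, ∀ b ∈ Finset.Icc 1 11,
      ∑ c ∈ Finset.Icc 1 11, M a c * S c b = ∑ c ∈ Finset.Icc 1 11, S a c * M c b) ∧
    (∀ a ∈ Finset.Icc 1 11, ∀ b ∈ Finset.Icc 1 11,
      ∑ c ∈ Finset.Icc 1 11, M a c * T c b = ∑ c ∈ Finset.Icc 1 11, T a c * M c b) ∧
    (∀ a ∈ Finset.Icc 1 11, ∀ b ∈ Finset.Icc 1 11, ∃ m : ℕ, M a b = m) ∧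
    M 1 1 = 1 := by
  have h : ∀ a b : ℕ, (π * a * b / 12 : ℝ) = π * ((a*b : ℕ) : ℝ) / 12 := by
    intro a b; push_cast; ring
  have hS' : ∀ a b, S a b = ((Real.sqrt (2/12) * f (a*b) : ℝ) : ℂ) := fun a b => by
    rw [hS, h a b]; rfl
  refine ⟨?_, ?_, ?_, ?_⟩
  · intro a ha b hb
    rw [Finset.mem_Icc] at ha hb
    obtain ⟨ha1, ha2⟩ := ha
    obtain ⟨hb1, hb2⟩ := hb
    rw [hsum, hsum]
    interval_cases a <;> interval_cases b <;>
      norm_num [hM, hS', F0, F7, F8, F9, F10, F11, F12, F14, F15, F16, F20, F21, F22, F24,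
        F25, F28, F30, F32, F33, F35, F36, F40, F42, F44, F45, F48, F49, F50, F55, F56,
        F63, F64, F66, F70, F72, F77, F80, F88, F99, F110, F121] <;> ring
  · intro a ha b hb
    simp only [hT, mul_ite, ite_mul, mul_one, mul_zero, one_mul, zero_mul]
    rw [Finset.sum_ite_eq' (Finset.Icc 1 11) b, Finset.sum_ite_eq (Finset.Icc 1 11) a]
    rw [if_pos hb, if_pos ha, hM]
    split_ifs with hcond
    · rw [one_mul, mul_one]
      rcases hcond with ⟨(rfl|rfl),(rfl|rfl)⟩|⟨(rfl|rfl),(rfl|rfl)⟩|⟨(rfl|rfl),(rfl|rfl)⟩ <;>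
        first
          | rfl
          | exact expe 1 7 1 (by norm_num)
          | exact (expe 1 7 1 (by norm_num)).symm
          | exact expe 4 8 1 (by norm_num)
          | exact (expe 4 8 1 (by norm_num)).symm
          | exact expe 5 11 2 (by norm_num)
          | exact (expe 5 11 2 (by norm_num)).symm
    · simp
  · intro a _ b _
    rw [hM]
    split_ifs
    exacts [⟨1, by norm_num⟩, ⟨0, by norm_num⟩]
  · rw [hM]; norm_num
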